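/- Let e, k, j be positive integers with e/2 < k < e - 3, j + k ≤ e - 1, and suppose either e + j - 2 ≥ 2k or 2j ≥ k + 1. Then the numerical semigroup S_k^e(j) = ⟨e,...,e+j-1, e+j+k,...,2e-1⟩ is not symmetric. -/

import Mathlib

/-- The set of gaps of a numerical semigroup (submonoid of ℕ). -/
def gapsOf (S : AddSubmonoid ℕ) : Set ℕ := {n | n ∉ S}

/-- The Frobenius number: the largest gap. -/
noncomputable def frobeniusNumber (S : AddSubmonoid ℕ) : ℕ := sSup (gapsOf S)

/-- The genus: the number of gaps. -/
noncomputable def genusOf (S : AddSubmonoid ℕ) : ℕ := Nat.card (gapsOf S)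

/-- A numerical semigroup is symmetric iff 2g = F + 1. -/
def IsSymmetricNS (S : AddSubmonoid ℕ) : Prop :=
  2 * genusOf S = frobeniusNumber S + 1

/-- The Sally type semigroup `S_k^e(j) = ⟨e,…,e+j-1, e+j+k,…,2e-1⟩`. -/
def sally (e k j : ℕ) : AddSubmonoid ℕ :=
  AddSubmonoid.closure (Set.Ico e (e + j) ∪ Set.Ico (e + j + k) (2 * e))

/-- Interval sum coverage. -/
lemma pair_cover (a1 b1 a2 b2 n : ℕ) (h1 : a1 ≤ b1) (h2 : a2 ≤ b2)
    (hl : a1 + a2 ≤ n) (hu : n ≤ b1 + b2) :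
    ∃ x y, a1 ≤ x ∧ x ≤ b1 ∧ a2 ≤ y ∧ y ≤ b2 ∧ x + y = n := by
  rcases le_total b1 (n - a2) with hcmp | hcmp
  · exact ⟨b1, n - b1, by omega⟩
  · exact ⟨n - a2, a2, by omega⟩

theorem sally_not_symmetric_large_k (e k j : ℕ) (hj : 0 < j)
    (hk : e < 2 * k) (hk' : k < e - 3) (hjk : j + k ≤ e - 1)
    (h : e + j - 2 ≥ 2 * k ∨ 2 * j ≥ k + 1) :
    ¬ IsSymmetricNS (sally e k j) := by
  classical
  have H : 2 * k + 2 ≤ e + j := by rcases h with h | h <;> omega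
  have hjltk : j < k := by omega
  set S := sally e k j with hS
  set F0 := 2 * e + j + k - 1 with hF0def
  -- membership helpers
  have memA : ∀ x, e ≤ x → x < e + j → x ∈ S := by
    intro x h1 h2
    exact AddSubmonoid.subset_closure (Set.mem_union_left _ (Set.mem_Ico.2 ⟨h1, h2⟩))
  have memB : ∀ x, e + j + k ≤ x → x < 2 * e → x ∈ S := by
    intro x h1 h2
    exact AddSubmonoid.subset_closure (Set.mem_union_right _ (Set.mem_Ico.2 ⟨h1, h2⟩))
  -- the upper bound submonoid
  let T : AddSubmonoid ℕ :=
  { carrier := {n | n = 0 ∨ (e ≤ n ∧ n < e + j) ∨ (e + j + k ≤ n ∧ n < 2 * e) ∨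
      (2 * e ≤ n ∧ n + 2 ≤ 2 * e + 2 * j) ∨ 2 * e + j + k ≤ n}
    zero_mem' := Or.inl rfl
    add_mem' := by
      intro a b ha hb
      simp only [Set.mem_setOf_eq] at ha hb ⊢
      omega }
  have memT : ∀ x : ℕ, x ∈ T ↔ (x = 0 ∨ (e ≤ x ∧ x < e + j) ∨ (e + j + k ≤ x ∧ x < 2 * e) ∨
      (2 * e ≤ x ∧ x + 2 ≤ 2 * e + 2 * j) ∨ 2 * e + j + k ≤ x) := fun x => Iff.rfl
  have hST : S ≤ T := by
    rw [hS, sally]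
    apply AddSubmonoid.closure_le.2
    rintro x (hx | hx) <;> rcases Set.mem_Ico.1 hx with ⟨h1, h2⟩ <;> exact (memT x).2 (by omega)
  have hnotmem : ∀ x, x ∈ S → (x = 0 ∨ (e ≤ x ∧ x < e + j) ∨ (e + j + k ≤ x ∧ x < 2 * e) ∨
      (2 * e ≤ x ∧ x + 2 ≤ 2 * e + 2 * j) ∨ 2 * e + j + k ≤ x) := by
    intro x hx
    exact (memT x).1 (hST hx)
  -- middle interval membership
  have memM : ∀ x, 2 * e ≤ x → x ≤ 2 * e + 2 * j - 2 → x ∈ S := by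
    intro x h1 h2
    obtain ⟨a, b, ha1, ha2, hb1, hb2, hab⟩ :=
      pair_cover e (e + j - 1) e (e + j - 1) x (by omega) (by omega) (by omega) (by omega)
    rw [← hab]
    exact AddSubmonoid.add_mem _ (memA a ha1 (by omega)) (memA b hb1 (by omega))
  -- everything ≥ 2e+j+k is in S
  have tail : ∀ d : ℕ, (2 * e + j + k + d) ∈ S := by
    intro d
    induction d using Nat.strong_induction_on with
    | _ d ih =>
      by_cases hd : d < e
      · set n := 2 * e + j + k + d with hn
        by_cases c1 : n ≤ 3 * e + j - 2
        · obtain ⟨a, b, ha1, ha2, hb1, hb2, hab⟩ :=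
            pair_cover e (e + j - 1) (e + j + k) (2 * e - 1) n
              (by omega) (by omega) (by omega) (by omega)
          rw [← hab]
          exact AddSubmonoid.add_mem _ (memA a ha1 (by omega)) (memB b hb1 (by omega))
        · by_cases c2 : n ≤ 3 * e + 3 * j - 3
          · obtain ⟨a, b, ha1, ha2, hb1, hb2, hab⟩ :=
              pair_cover e (e + j - 1) (2 * e) (2 * e + 2 * j - 2) n
                (by omega) (by omega) (by omega) (by omega)
            rw [← hab]
            exact AddSubmonoid.add_mem _ (memA a ha1 (by omega)) (memM b hb1 (by omega))
          · obtain ⟨a, b, ha1, ha2, hb1, hb2, hab⟩ :=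
              pair_cover (e + j + k) (2 * e - 1) (e + j + k) (2 * e - 1) n
                (by omega) (by omega) (by omega) (by omega)
            rw [← hab]
            exact AddSubmonoid.add_mem _ (memB a ha1 (by omega)) (memB b hb1 (by omega))
      · have hmem := ih (d - e) (by omega)
        have he : e ∈ S := memA e le_rfl (by omega)
        have : (2 * e + j + k + d) = e + (2 * e + j + k + (d - e)) := by omega
        rw [this]
        exact AddSubmonoid.add_mem _ he hmem
  have tail' : ∀ n, 2 * e + j + k ≤ n → n ∈ S := by
    intro n hn
    have : n = 2 * e + j + k + (n - (2 * e + j + k)) := by omega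
    rw [this]; exact tail _
  -- key gaps
  have hF0gap : F0 ∉ S := by
    intro hx
    have := hnotmem _ hx
    omega
  have hF1gap : F0 - 1 ∉ S := by
    intro hx
    have := hnotmem _ hx
    omega
  have h1gap : (1 : ℕ) ∉ S := by
    intro hx
    have := hnotmem _ hx
    omega
  -- gaps are bounded by F0
  have hgapbd : ∀ x ∈ gapsOf S, x ≤ F0 := by
    intro x hx
    by_contra hc
    exact hx (tail' x (by omega))
  -- Frobenius number
  have hFrob : frobeniusNumber S = F0 := by
    rw [frobeniusNumber]
    exact IsGreatest.csSup_eq ⟨hF0gap, hgapbd⟩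
  -- genus via a Finset
  set Gf : Finset ℕ := (Finset.range (F0 + 1)).filter (fun n => n ∉ S) with hGf
  set Nf : Finset ℕ := (Finset.range (F0 + 1)).filter (fun n => n ∈ S) with hNf
  have hgapsEq : gapsOf S = ↑Gf := by
    ext x
    simp only [hGf, Finset.coe_filter, Finset.mem_range, Set.mem_setOf_eq, gapsOf]
    constructor
    · intro hx; exact ⟨Nat.lt_succ_of_le (hgapbd x hx), hx⟩
    · intro hx; exact hx.2
  have hgenus : genusOf S = Gf.card := by
    rw [genusOf, hgapsEq, Nat.card_coe_set_eq, Set.ncard_coe_finset]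
  have hsplit : Nf.card + Gf.card = F0 + 1 := by
    have := Finset.card_filter_add_card_filter_not
      (s := Finset.range (F0 + 1)) (p := fun n => n ∈ S)
    rw [Finset.card_range] at this
    convert this using 2
  have h1mem : (1 : ℕ) ∈ Gf := by
    simp only [hGf, Finset.mem_filter, Finset.mem_range]
    exact ⟨by omega, h1gap⟩
  -- injection from Nf into Gf.erase 1
  have hinj : Nf.card ≤ (Gf.erase 1).card := by
    apply Finset.card_le_card_of_injOn (fun x => F0 - x)
    · intro x hx
      simp only [Finset.mem_coe, hNf, Finset.mem_filter, Finset.mem_range] at hx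
      obtain ⟨hxr, hxS⟩ := hx
      have hxle : x ≤ F0 := by omega
      have hgap : F0 - x ∉ S := by
        intro hc
        have : x + (F0 - x) ∈ S := AddSubmonoid.add_mem _ hxS hc
        rw [show x + (F0 - x) = F0 by omega] at this
        exact hF0gap this
      have hne1 : F0 - x ≠ 1 := by
        intro hc
        have hx1 : x = F0 - 1 := by omega
        rw [hx1] at hxS
        exact hF1gap hxS
      refine Finset.mem_erase.2 ⟨hne1, ?_⟩
      simp only [hGf, Finset.mem_filter, Finset.mem_range]
      exact ⟨by omega, hgap⟩
    · intro x hx y hy hxy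
      simp only [Finset.mem_coe, hNf, Finset.mem_filter, Finset.mem_range] at hx hy
      have hx' : x < F0 + 1 := hx.1
      have hy' : y < F0 + 1 := hy.1
      have hxy' : F0 - x = F0 - y := hxy
      omega
  have hcard_erase : (Gf.erase 1).card = Gf.card - 1 := Finset.card_erase_of_mem h1mem
  have hGfpos : 1 ≤ Gf.card := Finset.card_pos.2 ⟨1, h1mem⟩
  intro hsym
  rw [IsSymmetricNS, hgenus, hFrob] at hsym
  omega
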